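/- Let n ≥ 3 and let a = (a₁,…,aₙ) be a nondecreasing tuple of integers with each aᵢ ≥ 3, with combinatorial curvature Φ(a) = 1 − n/2 + Σᵢ₌₁ⁿ 1/aᵢ. Then Φ(a) = 0 if and only if a is one of the following seventeen patterns: (3,7,42), (3,8,24), (3,9,18), (3,10,15), (3,12,12), (4,5,20), (4,6,12), (4,8,8), (5,5,10), (6,6,6), (3,3,4,12), (3,3,6,6), (3,4,4,6), (4,4,4,4), (3,3,3,3,6), (3,3,3,4,4), (3,3,3,3,3,3). -/

import Mathlib

/-- The combinatorial curvature of a vertex pattern, given as the list of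
degrees of the incident faces: `Φ(a) = 1 - n/2 + ∑ i, 1/aᵢ`. -/
def curv (l : List ℕ) : ℚ :=
  1 - (l.length : ℚ) / 2 + (l.map fun x => (1 : ℚ) / x).sum

private lemma curv_eq (l : List ℕ) :
    curv l = 1 - (l.length : ℚ) / 2 + (l.map fun x : ℕ => (1:ℚ)/(x:ℚ)).sum := by
  rw [curv]
  congr 1
  induction l with
  | nil => simp
  | cons a t ih => simp_all

private lemma inv_le_num {b : ℕ} {q : ℚ} (hq : 0 < q) (h : q ≤ (b:ℚ)) :
    (1:ℚ)/(b:ℚ) ≤ 1/q := one_div_le_one_div_of_le hq h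

private lemma inv_le_inv_nat {a b : ℕ} (ha : 0 < a) (hab : a ≤ b) :
    (1:ℚ)/(b:ℚ) ≤ 1/(a:ℚ) := by
  apply one_div_le_one_div_of_le
  · exact_mod_cast ha
  · exact_mod_cast hab

private lemma aux3 (a b c : ℕ) (ha : 3 ≤ a) (hab : a ≤ b) (hbc : b ≤ c)
    (h : (1:ℚ)/a + 1/b + 1/c = 1/2) :
    a = 3 ∧ b = 7 ∧ c = 42 ∨ a = 3 ∧ b = 8 ∧ c = 24 ∨ a = 3 ∧ b = 9 ∧ c = 18 ∨
    a = 3 ∧ b = 10 ∧ c = 15 ∨ a = 3 ∧ b = 12 ∧ c = 12 ∨ a = 4 ∧ b = 5 ∧ c = 20 ∨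
    a = 4 ∧ b = 6 ∧ c = 12 ∨ a = 4 ∧ b = 8 ∧ c = 8 ∨ a = 5 ∧ b = 5 ∧ c = 10 ∨
    a = 6 ∧ b = 6 ∧ c = 6 := by
  have hb : 3 ≤ b := le_trans ha hab
  have hc : 3 ≤ c := le_trans hb hbc
  have haq : (0:ℚ) < a := by exact_mod_cast by omega
  have hbq : (0:ℚ) < b := by exact_mod_cast by omega
  have hcq : (0:ℚ) < c := by exact_mod_cast by omega
  have i1 : (1:ℚ)/b ≤ 1/a := inv_le_inv_nat (by omega) hab
  have i2 : (1:ℚ)/c ≤ 1/b := inv_le_inv_nat (by omega) hbc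
  have E := h
  field_simp at E
  norm_cast at E
  have ha6 : a ≤ 6 := by
    by_contra hx
    push_neg at hx
    have : (1:ℚ)/a ≤ 1/7 := inv_le_num (by norm_num) (by exact_mod_cast hx)
    linarith
  have hb12 : b ≤ 12 := by
    by_contra hx
    push_neg at hx
    have h3 : (1:ℚ)/a ≤ 1/3 := inv_le_num (by norm_num) (by exact_mod_cast ha)
    have : (1:ℚ)/b ≤ 1/13 := inv_le_num (by norm_num) (by exact_mod_cast hx)
    linarith
  clear h i1 i2 haq hbq hcq
  interval_cases a <;> interval_cases b <;>
  · have hc' : c = 6 ∨ c = 8 ∨ c = 10 ∨ c = 12 ∨ c = 15 ∨ c = 18 ∨ c = 20 ∨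
        c = 24 ∨ c = 42 := by omega
    rcases hc' with rfl|rfl|rfl|rfl|rfl|rfl|rfl|rfl|rfl <;> first | (exfalso; omega) | decide

private lemma aux4 (a b c d : ℕ) (ha : 3 ≤ a) (hab : a ≤ b) (hbc : b ≤ c) (hcd : c ≤ d)
    (h : (1:ℚ)/a + 1/b + 1/c + 1/d = 1) :
    a = 3 ∧ b = 3 ∧ c = 4 ∧ d = 12 ∨ a = 3 ∧ b = 3 ∧ c = 6 ∧ d = 6 ∨
    a = 3 ∧ b = 4 ∧ c = 4 ∧ d = 6 ∨ a = 4 ∧ b = 4 ∧ c = 4 ∧ d = 4 := by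
  have hb : 3 ≤ b := le_trans ha hab
  have hc : 3 ≤ c := le_trans hb hbc
  have hd : 3 ≤ d := le_trans hc hcd
  have haq : (0:ℚ) < a := by exact_mod_cast by omega
  have hbq : (0:ℚ) < b := by exact_mod_cast by omega
  have hcq : (0:ℚ) < c := by exact_mod_cast by omega
  have hdq : (0:ℚ) < d := by exact_mod_cast by omega
  have ia : (1:ℚ)/a ≤ 1/3 := inv_le_num (by norm_num) (by exact_mod_cast ha)
  have ib : (1:ℚ)/b ≤ 1/a := inv_le_inv_nat (by omega) hab
  have ic : (1:ℚ)/c ≤ 1/b := inv_le_inv_nat (by omega) hbc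
  have id' : (1:ℚ)/d ≤ 1/c := inv_le_inv_nat (by omega) hcd
  have E := h
  field_simp at E
  norm_cast at E
  have ha4 : a ≤ 4 := by
    by_contra hx
    push_neg at hx
    have : (1:ℚ)/a ≤ 1/5 := inv_le_num (by norm_num) (by exact_mod_cast hx)
    linarith
  have hb4 : b ≤ 4 := by
    by_contra hx
    push_neg at hx
    have : (1:ℚ)/b ≤ 1/5 := inv_le_num (by norm_num) (by exact_mod_cast hx)
    linarith
  have hc6 : c ≤ 6 := by
    by_contra hx
    push_neg at hx
    have ib3 : (1:ℚ)/b ≤ 1/3 := inv_le_num (by norm_num) (by exact_mod_cast hb)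
    have : (1:ℚ)/c ≤ 1/7 := inv_le_num (by norm_num) (by exact_mod_cast hx)
    linarith
  clear h ia ib ic id' haq hbq hcq hdq
  interval_cases a <;> interval_cases b <;> interval_cases c <;>
  · have hd' : d = 4 ∨ d = 6 ∨ d = 12 := by omega
    rcases hd' with rfl|rfl|rfl <;> first | (exfalso; omega) | decide

private lemma aux5 (a b c d e : ℕ) (ha : 3 ≤ a) (hab : a ≤ b) (hbc : b ≤ c)
    (hcd : c ≤ d) (hde : d ≤ e)
    (h : (1:ℚ)/a + 1/b + 1/c + 1/d + 1/e = 3/2) :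
    a = 3 ∧ b = 3 ∧ c = 3 ∧ d = 3 ∧ e = 6 ∨
    a = 3 ∧ b = 3 ∧ c = 3 ∧ d = 4 ∧ e = 4 := by
  have hb : 3 ≤ b := le_trans ha hab
  have hc : 3 ≤ c := le_trans hb hbc
  have hd : 3 ≤ d := le_trans hc hcd
  have he : 3 ≤ e := le_trans hd hde
  have haq : (0:ℚ) < a := by exact_mod_cast by omega
  have hbq : (0:ℚ) < b := by exact_mod_cast by omega
  have hcq : (0:ℚ) < c := by exact_mod_cast by omega
  have hdq : (0:ℚ) < d := by exact_mod_cast by omega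
  have heq : (0:ℚ) < e := by exact_mod_cast by omega
  have ia : (1:ℚ)/a ≤ 1/3 := inv_le_num (by norm_num) (by exact_mod_cast ha)
  have ib : (1:ℚ)/b ≤ 1/a := inv_le_inv_nat (by omega) hab
  have ic : (1:ℚ)/c ≤ 1/b := inv_le_inv_nat (by omega) hbc
  have id' : (1:ℚ)/d ≤ 1/c := inv_le_inv_nat (by omega) hcd
  have ie' : (1:ℚ)/e ≤ 1/d := inv_le_inv_nat (by omega) hde
  have E := h
  field_simp at E
  norm_cast at E
  have ha3 : a ≤ 3 := by
    by_contra hx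
    push_neg at hx
    have : (1:ℚ)/a ≤ 1/4 := inv_le_num (by norm_num) (by exact_mod_cast hx)
    linarith
  have hb3 : b ≤ 3 := by
    by_contra hx
    push_neg at hx
    have : (1:ℚ)/b ≤ 1/4 := inv_le_num (by norm_num) (by exact_mod_cast hx)
    linarith
  have hc3 : c ≤ 3 := by
    by_contra hx
    push_neg at hx
    have ib3 : (1:ℚ)/b ≤ 1/3 := inv_le_num (by norm_num) (by exact_mod_cast hb)
    have : (1:ℚ)/c ≤ 1/4 := inv_le_num (by norm_num) (by exact_mod_cast hx)
    linarith
  have hd4 : d ≤ 4 := by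
    by_contra hx
    push_neg at hx
    have ib3 : (1:ℚ)/b ≤ 1/3 := inv_le_num (by norm_num) (by exact_mod_cast hb)
    have ic3 : (1:ℚ)/c ≤ 1/3 := inv_le_num (by norm_num) (by exact_mod_cast hc)
    have : (1:ℚ)/d ≤ 1/5 := inv_le_num (by norm_num) (by exact_mod_cast hx)
    linarith
  clear h ia ib ic id' ie' haq hbq hcq hdq heq
  interval_cases a <;> interval_cases b <;> interval_cases c <;> interval_cases d <;>
  · have he' : e = 4 ∨ e = 6 := by omega
    rcases he' with rfl|rfl <;> first | (exfalso; omega) | decide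

private lemma aux6 (a b c d e f : ℕ) (ha : 3 ≤ a) (hab : a ≤ b) (hbc : b ≤ c)
    (hcd : c ≤ d) (hde : d ≤ e) (hef : e ≤ f)
    (h : (1:ℚ)/a + 1/b + 1/c + 1/d + 1/e + 1/f = 2) :
    a = 3 ∧ b = 3 ∧ c = 3 ∧ d = 3 ∧ e = 3 ∧ f = 3 := by
  have hb : 3 ≤ b := le_trans ha hab
  have hc : 3 ≤ c := le_trans hb hbc
  have hd : 3 ≤ d := le_trans hc hcd
  have he : 3 ≤ e := le_trans hd hde
  have hf : 3 ≤ f := le_trans he hef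
  have haq : (0:ℚ) < a := by exact_mod_cast by omega
  have hbq : (0:ℚ) < b := by exact_mod_cast by omega
  have hcq : (0:ℚ) < c := by exact_mod_cast by omega
  have hdq : (0:ℚ) < d := by exact_mod_cast by omega
  have heq : (0:ℚ) < e := by exact_mod_cast by omega
  have hfq : (0:ℚ) < f := by exact_mod_cast by omega
  have ia : (1:ℚ)/a ≤ 1/3 := inv_le_num (by norm_num) (by exact_mod_cast ha)
  have ib : (1:ℚ)/b ≤ 1/a := inv_le_inv_nat (by omega) hab
  have ic : (1:ℚ)/c ≤ 1/b := inv_le_inv_nat (by omega) hbc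
  have id' : (1:ℚ)/d ≤ 1/c := inv_le_inv_nat (by omega) hcd
  have ie' : (1:ℚ)/e ≤ 1/d := inv_le_inv_nat (by omega) hde
  have if' : (1:ℚ)/f ≤ 1/e := inv_le_inv_nat (by omega) hef
  have E := h
  field_simp at E
  norm_cast at E
  have ha3 : a ≤ 3 := by
    by_contra hx
    push_neg at hx
    have : (1:ℚ)/a ≤ 1/4 := inv_le_num (by norm_num) (by exact_mod_cast hx)
    linarith
  have hb3 : b ≤ 3 := by
    by_contra hx
    push_neg at hx
    have : (1:ℚ)/b ≤ 1/4 := inv_le_num (by norm_num) (by exact_mod_cast hx)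
    linarith
  have hc3 : c ≤ 3 := by
    by_contra hx
    push_neg at hx
    have ib3 : (1:ℚ)/b ≤ 1/3 := inv_le_num (by norm_num) (by exact_mod_cast hb)
    have : (1:ℚ)/c ≤ 1/4 := inv_le_num (by norm_num) (by exact_mod_cast hx)
    linarith
  have hd3 : d ≤ 3 := by
    by_contra hx
    push_neg at hx
    have ib3 : (1:ℚ)/b ≤ 1/3 := inv_le_num (by norm_num) (by exact_mod_cast hb)
    have ic3 : (1:ℚ)/c ≤ 1/3 := inv_le_num (by norm_num) (by exact_mod_cast hc)
    have : (1:ℚ)/d ≤ 1/4 := inv_le_num (by norm_num) (by exact_mod_cast hx)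
    linarith
  have he3 : e ≤ 3 := by
    by_contra hx
    push_neg at hx
    have ib3 : (1:ℚ)/b ≤ 1/3 := inv_le_num (by norm_num) (by exact_mod_cast hb)
    have ic3 : (1:ℚ)/c ≤ 1/3 := inv_le_num (by norm_num) (by exact_mod_cast hc)
    have id3 : (1:ℚ)/d ≤ 1/3 := inv_le_num (by norm_num) (by exact_mod_cast hd)
    have : (1:ℚ)/e ≤ 1/4 := inv_le_num (by norm_num) (by exact_mod_cast hx)
    linarith
  clear h ia ib ic id' ie' if' haq hbq hcq hdq heq hfq
  interval_cases a <;> interval_cases b <;> interval_cases c <;> interval_cases d <;>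
    interval_cases e <;> omega

/-- Classification (Table 2) of all vertex patterns (nondecreasing, length `≥ 3`,
entries `≥ 3`) with vanishing combinatorial curvature: exactly the seventeen
patterns listed. -/
theorem pattern_zero_curv_classification (l : List ℕ) (hlen : 3 ≤ l.length)
    (hsort : l.Pairwise (· ≤ ·)) (hge : ∀ x ∈ l, 3 ≤ x) :
    curv l = 0 ↔
      l = [3, 7, 42] ∨ l = [3, 8, 24] ∨ l = [3, 9, 18] ∨ l = [3, 10, 15] ∨
      l = [3, 12, 12] ∨ l = [4, 5, 20] ∨ l = [4, 6, 12] ∨ l = [4, 8, 8] ∨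
      l = [5, 5, 10] ∨ l = [6, 6, 6] ∨ l = [3, 3, 4, 12] ∨ l = [3, 3, 6, 6] ∨
      l = [3, 4, 4, 6] ∨ l = [4, 4, 4, 4] ∨ l = [3, 3, 3, 3, 6] ∨
      l = [3, 3, 3, 4, 4] ∨ l = [3, 3, 3, 3, 3, 3] := by
  rw [curv_eq]
  constructor
  · intro h
    have hn6 : l.length ≤ 6 := by
      by_contra hx
      push_neg at hx
      have key : ∀ x ∈ l.map (fun x : ℕ => (1:ℚ)/(x:ℚ)), x ≤ 1/3 := by
        intro x hx
        simp only [List.mem_map] at hx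
        obtain ⟨n, hn, rfl⟩ := hx
        exact inv_le_num (by norm_num) (by exact_mod_cast hge n hn)
      have hs := List.sum_le_card_nsmul _ _ key
      rw [List.length_map, nsmul_eq_mul] at hs
      have h7 : (7:ℚ) ≤ l.length := by exact_mod_cast hx
      linarith
    rcases l with _|⟨a,_|⟨b,_|⟨c,_|⟨d,_|⟨e,_|⟨f,_|⟨g,t⟩⟩⟩⟩⟩⟩⟩
    · simp at hlen
    · simp at hlen
    · simp at hlen
    · -- n = 3
      simp only [List.pairwise_cons, List.mem_cons, List.mem_singleton,
        List.not_mem_nil] at hsort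
      obtain ⟨ha, hb, -⟩ := hsort
      have hab : a ≤ b := ha b (by simp)
      have hbc : b ≤ c := hb c (by simp)
      have h' : (1:ℚ)/a + 1/b + 1/c = 1/2 := by
        simp only [List.map_cons, List.map_nil, List.sum_cons, List.sum_nil,
          List.length_cons, List.length_nil] at h
        push_cast at h
        linarith
      have := aux3 a b c (hge a (by simp)) hab hbc h'
      rcases this with ⟨rfl,rfl,rfl⟩|⟨rfl,rfl,rfl⟩|⟨rfl,rfl,rfl⟩|⟨rfl,rfl,rfl⟩|
        ⟨rfl,rfl,rfl⟩|⟨rfl,rfl,rfl⟩|⟨rfl,rfl,rfl⟩|⟨rfl,rfl,rfl⟩|⟨rfl,rfl,rfl⟩|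
        ⟨rfl,rfl,rfl⟩ <;> tauto
    · -- n = 4
      simp only [List.pairwise_cons, List.mem_cons, List.mem_singleton,
        List.not_mem_nil] at hsort
      obtain ⟨ha, hb, hc, -⟩ := hsort
      have hab : a ≤ b := ha b (by simp)
      have hbc : b ≤ c := hb c (by simp)
      have hcd : c ≤ d := hc d (by simp)
      have h' : (1:ℚ)/a + 1/b + 1/c + 1/d = 1 := by
        simp only [List.map_cons, List.map_nil, List.sum_cons, List.sum_nil,
          List.length_cons, List.length_nil] at h
        push_cast at h
        linarith
      have := aux4 a b c d (hge a (by simp)) hab hbc hcd h'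
      rcases this with ⟨rfl,rfl,rfl,rfl⟩|⟨rfl,rfl,rfl,rfl⟩|⟨rfl,rfl,rfl,rfl⟩|
        ⟨rfl,rfl,rfl,rfl⟩ <;> tauto
    · -- n = 5
      simp only [List.pairwise_cons, List.mem_cons, List.mem_singleton,
        List.not_mem_nil] at hsort
      obtain ⟨ha, hb, hc, hd, -⟩ := hsort
      have hab : a ≤ b := ha b (by simp)
      have hbc : b ≤ c := hb c (by simp)
      have hcd : c ≤ d := hc d (by simp)
      have hde : d ≤ e := hd e (by simp)
      have h' : (1:ℚ)/a + 1/b + 1/c + 1/d + 1/e = 3/2 := by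
        simp only [List.map_cons, List.map_nil, List.sum_cons, List.sum_nil,
          List.length_cons, List.length_nil] at h
        push_cast at h
        linarith
      have := aux5 a b c d e (hge a (by simp)) hab hbc hcd hde h'
      rcases this with ⟨rfl,rfl,rfl,rfl,rfl⟩|⟨rfl,rfl,rfl,rfl,rfl⟩ <;> tauto
    · -- n = 6
      simp only [List.pairwise_cons, List.mem_cons, List.mem_singleton,
        List.not_mem_nil] at hsort
      obtain ⟨ha, hb, hc, hd, he, -⟩ := hsort
      have hab : a ≤ b := ha b (by simp)
      have hbc : b ≤ c := hb c (by simp)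
      have hcd : c ≤ d := hc d (by simp)
      have hde : d ≤ e := hd e (by simp)
      have hef : e ≤ f := he f (by simp)
      have h' : (1:ℚ)/a + 1/b + 1/c + 1/d + 1/e + 1/f = 2 := by
        simp only [List.map_cons, List.map_nil, List.sum_cons, List.sum_nil,
          List.length_cons, List.length_nil] at h
        push_cast at h
        linarith
      have := aux6 a b c d e f (hge a (by simp)) hab hbc hcd hde hef h'
      obtain ⟨rfl,rfl,rfl,rfl,rfl,rfl⟩ := this
      tauto
    · -- n ≥ 7
      exfalso
      simp only [List.length_cons] at hn6
      omega
  · rintro (rfl|rfl|rfl|rfl|rfl|rfl|rfl|rfl|rfl|rfl|rfl|rfl|rfl|rfl|rfl|rfl|rfl) <;>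
      norm_num
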